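/- Let a : ℝ → ℝ be continuous with sup a = ā < ∞ and a(x) → -∞ as x → ±∞, and let Q̄, τ > 0 and ψ₀ : ℝ → [0,1] be bounded. Then the function x ↦ ψ₀(x+τ) e^{∫_x^{x+τ} a(s)ds} + Q̄ ∫₀^τ e^{∫_x^{x+s} a(s')ds'} e^{(τ-s)(ā+Q̄)} ds tends to 0 as x → ±∞. -/

import Mathlib

open Filter intervalIntegral

theorem vanishing_at_infinity
    (a : ℝ → ℝ) (ha : Continuous a) (abar : ℝ) (habar : ∀ x, a x ≤ abar)
    (hatop : Tendsto a atTop atBot) (habot : Tendsto a atBot atBot)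
    (Qbar τ : ℝ) (hQbar : 0 < Qbar) (hτ : 0 < τ)
    (ψ₀ : ℝ → ℝ) (hψ₀0 : ∀ x, 0 ≤ ψ₀ x) (hψ₀1 : ∀ x, ψ₀ x ≤ 1)
    (F : ℝ → ℝ)
    (hF : ∀ x, F x = ψ₀ (x + τ) * Real.exp (∫ s in x..(x + τ), a s)
      + Qbar * ∫ s in (0:ℝ)..τ,
          Real.exp (∫ s' in x..(x + s), a s') * Real.exp ((τ - s) * (abar + Qbar))) :
    Tendsto F atTop (nhds 0) ∧ Tendsto F atBot (nhds 0) := by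
  set C : ℝ := Real.exp (τ * |abar + Qbar|) with hC
  have hCpos : 0 < C := Real.exp_pos _
  -- continuity of the inner integrand in s
  have hcont : ∀ x : ℝ, Continuous fun s : ℝ =>
      Real.exp (∫ s' in x..(x + s), a s') * Real.exp ((τ - s) * (abar + Qbar)) := by
    intro x
    have h1 : Continuous fun u : ℝ => ∫ s' in x..u, a s' :=
      intervalIntegral.continuous_primitive (fun p q => ha.intervalIntegrable p q) x
    exact ((h1.comp (continuous_const.add continuous_id)).rexp).mul
      (((continuous_const.sub continuous_id).mul continuous_const).rexp)
  -- nonnegativity of F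
  have hF0 : ∀ x, 0 ≤ F x := by
    intro x
    rw [hF x]
    have h2 : 0 ≤ ∫ s in (0:ℝ)..τ,
        Real.exp (∫ s' in x..(x + s), a s') * Real.exp ((τ - s) * (abar + Qbar)) :=
      intervalIntegral.integral_nonneg hτ.le fun u _ =>
        mul_nonneg (Real.exp_pos _).le (Real.exp_pos _).le
    exact add_nonneg (mul_nonneg (hψ₀0 _) (Real.exp_pos _).le)
      (mul_nonneg hQbar.le h2)
  -- the key estimate
  have key : ∀ M : ℝ, 0 < M → ∀ x : ℝ, (∀ y ∈ Set.Icc x (x + τ), a y ≤ -M) →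
      F x ≤ Real.exp (-(M * τ)) + Qbar * (C / M) := by
    intro M hM x hx
    rw [hF x]
    have hxt : x ≤ x + τ := by linarith
    -- first term
    have hint1 : (∫ s in x..(x + τ), a s) ≤ -(M * τ) := by
      have := intervalIntegral.integral_mono_on hxt (ha.intervalIntegrable x (x + τ))
        (_root_.intervalIntegrable_const (μ := MeasureTheory.volume) (c := -M)) hx
      simpa [mul_comm] using this.trans_eq (by simp [mul_comm])
    have h1 : ψ₀ (x + τ) * Real.exp (∫ s in x..(x + τ), a s) ≤ Real.exp (-(M * τ)) := by
      calc ψ₀ (x + τ) * Real.exp (∫ s in x..(x + τ), a s)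
          ≤ 1 * Real.exp (∫ s in x..(x + τ), a s) :=
            mul_le_mul_of_nonneg_right (hψ₀1 _) (Real.exp_pos _).le
        _ ≤ Real.exp (-(M * τ)) := by rw [one_mul]; exact Real.exp_le_exp.2 hint1
    -- second term: pointwise bound on the integrand
    have hpt : ∀ s ∈ Set.Icc (0:ℝ) τ,
        Real.exp (∫ s' in x..(x + s), a s') * Real.exp ((τ - s) * (abar + Qbar))
          ≤ Real.exp (-(M * s)) * C := by
      intro s hs
      obtain ⟨hs0, hsτ⟩ := hs
      have hxs : x ≤ x + s := by linarith
      have hint2 : (∫ s' in x..(x + s), a s') ≤ -(M * s) := by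
        have hsub : ∀ y ∈ Set.Icc x (x + s), a y ≤ -M := fun y hy =>
          hx y ⟨hy.1, by linarith [hy.2]⟩
        have := intervalIntegral.integral_mono_on hxs (ha.intervalIntegrable x (x + s))
          (_root_.intervalIntegrable_const (μ := MeasureTheory.volume) (c := -M)) hsub
        simpa [mul_comm] using this.trans_eq (by simp [mul_comm])
      have hbexp : Real.exp ((τ - s) * (abar + Qbar)) ≤ C := by
        apply Real.exp_le_exp.2
        calc (τ - s) * (abar + Qbar) ≤ |(τ - s) * (abar + Qbar)| := le_abs_self _
          _ = |τ - s| * |abar + Qbar| := abs_mul _ _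
          _ ≤ τ * |abar + Qbar| := by
              apply mul_le_mul_of_nonneg_right _ (abs_nonneg _)
              rw [abs_of_nonneg (by linarith)]; linarith
      exact mul_le_mul (Real.exp_le_exp.2 hint2) hbexp (Real.exp_pos _).le
        (Real.exp_pos _).le
    -- integrate the pointwise bound
    have hInt2 : (∫ s in (0:ℝ)..τ,
        Real.exp (∫ s' in x..(x + s), a s') * Real.exp ((τ - s) * (abar + Qbar)))
          ≤ C / M := by
      have hi1 : IntervalIntegrable (fun s : ℝ =>
          Real.exp (∫ s' in x..(x + s), a s') * Real.exp ((τ - s) * (abar + Qbar)))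
          MeasureTheory.volume 0 τ := (hcont x).intervalIntegrable 0 τ
      have hi2 : IntervalIntegrable (fun s : ℝ => Real.exp (-(M * s)) * C)
          MeasureTheory.volume 0 τ := by
        apply Continuous.intervalIntegrable
        exact ((continuous_const.mul continuous_id).neg.rexp).mul continuous_const
      have step1 := intervalIntegral.integral_mono_on hτ.le hi1 hi2 hpt
      have step2 : (∫ s in (0:ℝ)..τ, Real.exp (-(M * s)) * C)
          = ((1 - Real.exp (-(M * τ))) / M) * C := by
        rw [intervalIntegral.integral_mul_const]
        congr 1
        have : (∫ s in (0:ℝ)..τ, Real.exp (-(M * s)))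
            = ∫ s in (0:ℝ)..τ, Real.exp (-M * s) := by
          congr 1; ext s; ring_nf
        rw [this, intervalIntegral.integral_comp_mul_left (fun u => Real.exp u)
          (neg_ne_zero.2 hM.ne')]
        have hMne : M ≠ 0 := hM.ne'
        rw [integral_exp]
        rw [smul_eq_mul]
        field_simp
        rw [mul_zero, neg_zero, Real.exp_zero]
        ring
      have step3 : ((1 - Real.exp (-(M * τ))) / M) * C ≤ C / M := by
        rw [div_mul_eq_mul_div, div_le_div_iff₀ hM hM]
        have : 0 ≤ Real.exp (-(M * τ)) := (Real.exp_pos _).le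
        nlinarith [mul_nonneg (mul_nonneg this hCpos.le) hM.le]
      linarith [step1.trans_eq step2]
    have h2 : Qbar * (∫ s in (0:ℝ)..τ,
        Real.exp (∫ s' in x..(x + s), a s') * Real.exp ((τ - s) * (abar + Qbar)))
          ≤ Qbar * (C / M) := mul_le_mul_of_nonneg_left hInt2 hQbar.le
    linarith
  -- the bound tends to 0 as M → ∞
  have hBnd : Tendsto (fun M : ℝ => Real.exp (-(M * τ)) + Qbar * (C / M)) atTop (nhds 0) := by
    have t1 : Tendsto (fun M : ℝ => Real.exp (-(M * τ))) atTop (nhds 0) := by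
      apply Real.tendsto_exp_atBot.comp
      have : Tendsto (fun M : ℝ => M * τ) atTop atTop :=
        Tendsto.atTop_mul_const hτ tendsto_id
      exact tendsto_neg_atTop_atBot.comp this
    have t2 : Tendsto (fun M : ℝ => Qbar * (C / M)) atTop (nhds 0) := by
      have := tendsto_const_div_atTop_nhds_zero_nat (𝕜 := ℝ)
      have h := Tendsto.const_mul Qbar (tendsto_const_nhds.div_atTop
        (tendsto_id (α := ℝ)) : Tendsto (fun M : ℝ => C / M) atTop (nhds 0))
      simpa using h
    simpa using t1.add t2
  constructor
  · rw [NormedAddCommGroup.tendsto_nhds_zero]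
    intro ε hε
    obtain ⟨M, hMε, hM0⟩ := ((hBnd.eventually (gt_mem_nhds hε)).and
      (eventually_gt_atTop 0)).exists
    have : ∀ᶠ y in atTop, a y ≤ -M := hatop.eventually (eventually_le_atBot (-M))
    obtain ⟨X, hX⟩ := eventually_atTop.1 this
    rw [eventually_atTop]
    refine ⟨X, fun x hxX => ?_⟩
    have hb := key M hM0 x (fun y hy => hX y (le_trans hxX hy.1))
    rw [Real.norm_eq_abs, abs_of_nonneg (hF0 x)]
    exact lt_of_le_of_lt hb hMε
  · rw [NormedAddCommGroup.tendsto_nhds_zero]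
    intro ε hε
    obtain ⟨M, hMε, hM0⟩ := ((hBnd.eventually (gt_mem_nhds hε)).and
      (eventually_gt_atTop 0)).exists
    have : ∀ᶠ y in atBot, a y ≤ -M := habot.eventually (eventually_le_atBot (-M))
    obtain ⟨X, hX⟩ := eventually_atBot.1 this
    rw [eventually_atBot]
    refine ⟨X - τ, fun x hxX => ?_⟩
    have hb := key M hM0 x (fun y hy => hX y (by linarith [hy.2]))
    rw [Real.norm_eq_abs, abs_of_nonneg (hF0 x)]
    exact lt_of_le_of_lt hb hMε
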